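/- There exists an absolute constant C > 0 such that for every arc I ⊆ 𝕋 and every a ∈ L^∞(𝕋) supported in I with ∫_𝕋 a(θ) dθ = 0, one has Σ_{n ∈ ℤ∖{0}} Ψ₀(|n â(n)|) / n² ≤ C |I| Ψ₀(‖a‖_{L^∞(𝕋)}). -/

import Mathlib

open MeasureTheory Real Set ENNReal

noncomputable section

/-- `Ψ₀(t) = t / log(e+t)`. -/
def psi0 (t : ℝ) : ℝ := t / Real.log (Real.exp 1 + t)

/-- `Ψ₀` on `[0,∞]`, with `Ψ₀(∞) = ∞`. -/
def psi0E (t : ℝ≥0∞) : ℝ≥0∞ := t / ENNReal.ofReal (Real.log (Real.exp 1 + t.toReal))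

/-- The `n`-th Fourier coefficient `â(n) = (2π)⁻¹ ∫_0^{2π} a(θ) e^{-inθ} dθ`. -/
def fourierCoeffT (a : ℝ → ℂ) (n : ℤ) : ℂ :=
  (2 * π : ℂ)⁻¹ * ∫ θ in (0 : ℝ)..(2 * π), a θ * Complex.exp (-Complex.I * n * θ)

/-- The `L^∞` norm (essential supremum of `|a|`), valued in `[0,∞]`. -/
def einfNormC (a : ℝ → ℂ) : ℝ≥0∞ := essSup (fun θ => (‖a θ‖₊ : ℝ≥0∞)) volume

open Finset






lemma one_le_loge (t : ℝ) (ht : 0 ≤ t) : 1 ≤ Real.log (Real.exp 1 + t) := by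
  have h1 : Real.log (Real.exp 1) ≤ Real.log (Real.exp 1 + t) :=
    Real.log_le_log (Real.exp_pos 1) (by linarith)
  rwa [Real.log_exp] at h1

lemma psi0_nonneg (t : ℝ) (ht : 0 ≤ t) : 0 ≤ psi0 t :=
  div_nonneg ht (by linarith [one_le_loge t ht])

lemma psi0_le_self (t : ℝ) (ht : 0 ≤ t) : psi0 t ≤ t :=
  div_le_self ht (one_le_loge t ht)

lemma one_le_sqrt_eM (M : ℝ) (hM : 0 ≤ M) : 1 ≤ Real.sqrt (Real.exp 1 + M) := by
  have h1 : Real.sqrt 1 ≤ Real.sqrt (Real.exp 1 + M) := by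
    apply Real.sqrt_le_sqrt
    have := Real.add_one_le_exp (1:ℝ)
    linarith
  rwa [Real.sqrt_one] at h1

lemma half_log_le (M t : ℝ) (hM : 0 ≤ M) (h : Real.sqrt (Real.exp 1 + M) ≤ t) :
    Real.log (Real.exp 1 + M) / 2 ≤ Real.log (Real.exp 1 + t) := by
  have h1 : Real.log (Real.sqrt (Real.exp 1 + M)) ≤ Real.log (Real.exp 1 + t) := by
    apply Real.log_le_log (Real.sqrt_pos.mpr (by positivity))
    have : 0 < Real.exp 1 := Real.exp_pos 1
    linarith
  rwa [Real.log_sqrt (by positivity)] at h1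

/-- If `t ≤ x` and `L·√(e+M) ≤ x` then `psi0 t ≤ 2x/L`. -/
lemma psi0_le_two_div (M t x : ℝ) (hM : 0 ≤ M) (ht0 : 0 ≤ t) (htx : t ≤ x)
    (hx : Real.log (Real.exp 1 + M) * Real.sqrt (Real.exp 1 + M) ≤ x) :
    psi0 t ≤ 2 * x / Real.log (Real.exp 1 + M) := by
  have hL1 : 1 ≤ Real.log (Real.exp 1 + M) := one_le_loge M hM
  have hL0 : 0 < Real.log (Real.exp 1 + M) := by linarith
  have hsq : 1 ≤ Real.sqrt (Real.exp 1 + M) := one_le_sqrt_eM M hM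
  have hx0 : 0 ≤ x := le_trans (by nlinarith) hx
  by_cases h : t ≤ Real.sqrt (Real.exp 1 + M)
  · calc psi0 t ≤ t := psi0_le_self t ht0
    _ ≤ Real.sqrt (Real.exp 1 + M) := h
    _ ≤ x / Real.log (Real.exp 1 + M) := by
        rw [le_div_iff₀ hL0]; nlinarith
    _ ≤ 2 * x / Real.log (Real.exp 1 + M) := by gcongr; linarith
  · push_neg at h
    have hlog := half_log_le M t hM (le_of_lt h)
    calc psi0 t = t / Real.log (Real.exp 1 + t) := rfl
    _ ≤ t / (Real.log (Real.exp 1 + M) / 2) := by gcongr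
    _ = 2 * t / Real.log (Real.exp 1 + M) := by field_simp
    _ ≤ 2 * x / Real.log (Real.exp 1 + M) := by gcongr

lemma psi0_le_add (M t : ℝ) (hM : 0 ≤ M) (ht : 0 ≤ t) :
    psi0 t ≤ Real.sqrt (Real.exp 1 + M) + 2 * t / Real.log (Real.exp 1 + M) := by
  have hL1 : 1 ≤ Real.log (Real.exp 1 + M) := one_le_loge M hM
  have hL0 : 0 < Real.log (Real.exp 1 + M) := by linarith
  by_cases h : t ≤ Real.sqrt (Real.exp 1 + M)
  · have h1 : psi0 t ≤ t := psi0_le_self t ht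
    have h2 : 0 ≤ 2 * t / Real.log (Real.exp 1 + M) := by positivity
    linarith
  · push_neg at h
    have hlog := half_log_le M t hM (le_of_lt h)
    have h3 : psi0 t ≤ 2 * t / Real.log (Real.exp 1 + M) := by
      calc psi0 t = t / Real.log (Real.exp 1 + t) := rfl
      _ ≤ t / (Real.log (Real.exp 1 + M) / 2) := by gcongr
      _ = 2 * t / Real.log (Real.exp 1 + M) := by field_simp
    have h4 : 0 ≤ Real.sqrt (Real.exp 1 + M) := Real.sqrt_nonneg _
    linarith

/-- Key constant estimate: for `M ≥ 1`, `L³ √(e+M) ≤ 1024 M`. -/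
lemma key_const (M : ℝ) (hM : 1 ≤ M) :
    (Real.log (Real.exp 1 + M))^3 * Real.sqrt (Real.exp 1 + M) ≤ 1024 * M := by
  have hM0 : (0:ℝ) < M := by linarith
  have hL1 : 1 ≤ Real.log (Real.exp 1 + M) := one_le_loge M (by linarith)
  have he : Real.exp 1 ≤ 3 := by
    have := Real.exp_one_lt_d9; linarith
  have h4M : Real.exp 1 + M ≤ 4 * M := by linarith
  have hrpow1 : (1:ℝ) ≤ M ^ ((1:ℝ)/6) := Real.one_le_rpow hM (by norm_num)
  have hlogM : Real.log M ≤ 6 * M ^ ((1:ℝ)/6) := by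
    have := Real.log_le_rpow_div (le_of_lt hM0) (show (0:ℝ) < 1/6 by norm_num)
    calc Real.log M ≤ M ^ ((1:ℝ)/6) / (1/6) := this
    _ = 6 * M ^ ((1:ℝ)/6) := by ring
  have hlog4 : Real.log 4 ≤ 2 := by
    have h2 : Real.exp 2 = Real.exp 1 * Real.exp 1 := by
      rw [← Real.exp_add]; norm_num
    have h1 : (4:ℝ) ≤ Real.exp 2 := by
      have := Real.exp_one_gt_d9
      nlinarith
    calc Real.log 4 ≤ Real.log (Real.exp 2) := Real.log_le_log (by norm_num) h1
    _ = 2 := Real.log_exp 2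
  have hL8 : Real.log (Real.exp 1 + M) ≤ 8 * M ^ ((1:ℝ)/6) := by
    calc Real.log (Real.exp 1 + M) ≤ Real.log (4 * M) := Real.log_le_log (by positivity) h4M
    _ = Real.log 4 + Real.log M := Real.log_mul (by norm_num) (ne_of_gt hM0)
    _ ≤ 2 + 6 * M ^ ((1:ℝ)/6) := by linarith
    _ ≤ 8 * M ^ ((1:ℝ)/6) := by linarith
  have hL6 : (Real.log (Real.exp 1 + M))^6 ≤ 8^6 * M := by
    have h1 : (Real.log (Real.exp 1 + M))^6 ≤ (8 * M ^ ((1:ℝ)/6))^6 := by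
      apply pow_le_pow_left₀ (by linarith) hL8
    have h2 : (M ^ ((1:ℝ)/6))^(6:ℕ) = M := by
      rw [← Real.rpow_natCast (M ^ ((1:ℝ)/6)) 6, ← Real.rpow_mul (le_of_lt hM0)]
      norm_num
    calc (Real.log (Real.exp 1 + M))^6 ≤ (8 * M ^ ((1:ℝ)/6))^6 := h1
    _ = 8^6 * (M ^ ((1:ℝ)/6))^(6:ℕ) := by ring
    _ = 8^6 * M := by rw [h2]
  have hs : ((Real.log (Real.exp 1 + M))^3 * Real.sqrt (Real.exp 1 + M))^2 ≤ (1024 * M)^2 := by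
    have hss : (Real.sqrt (Real.exp 1 + M))^2 = Real.exp 1 + M := Real.sq_sqrt (by positivity)
    calc ((Real.log (Real.exp 1 + M))^3 * Real.sqrt (Real.exp 1 + M))^2
        = (Real.log (Real.exp 1 + M))^6 * (Real.sqrt (Real.exp 1 + M))^2 := by ring
    _ = (Real.log (Real.exp 1 + M))^6 * (Real.exp 1 + M) := by rw [hss]
    _ ≤ (8^6 * M) * (4 * M) := by
        apply mul_le_mul hL6 h4M (by positivity) (by positivity)
    _ = (1024 * M)^2 := by ring
  nlinarith [hs, Real.sqrt_nonneg (Real.exp 1 + M),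
    pow_nonneg (le_trans zero_le_one hL1) 3, hM0]





lemma le_of_sq_le_sq' (x y : ℝ) (hx : 0 ≤ x) (hy : 0 ≤ y) (h : x^2 ≤ y^2) : x ≤ y := by
  nlinarith

lemma tail_nat (m : ℕ) (hm : 1 ≤ m) (v : Finset ℕ) (hv : ∀ k ∈ v, m ≤ k) :
    ∑ k ∈ v, ((k:ℝ)^2)⁻¹ ≤ 2/m := by
  have hsub : v ⊆ Finset.Ioo (m-1) (v.sup id + 1) := by
    intro k hk
    refine Finset.mem_Ioo.mpr ⟨?_, ?_⟩
    · have := hv k hk; omega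
    · exact Nat.lt_succ_of_le (Finset.le_sup (f := id) hk)
  have h1 : ∑ k ∈ v, ((k:ℝ)^2)⁻¹ ≤ ∑ k ∈ Finset.Ioo (m-1) (v.sup id + 1), ((k:ℝ)^2)⁻¹ := by
    apply Finset.sum_le_sum_of_subset_of_nonneg hsub
    intro i _ _; positivity
  have h2 := sum_Ioo_inv_sq_le (α := ℝ) (m-1) (v.sup id + 1)
  have h3 : ((m-1 : ℕ):ℝ) + 1 = m := by
    rw [Nat.cast_sub hm]; ring
  calc ∑ k ∈ v, ((k:ℝ)^2)⁻¹ ≤ 2/(((m-1:ℕ):ℝ) + 1) := le_trans h1 h2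
  _ = 2/m := by rw [h3]

lemma tail_int (m : ℕ) (hm : 1 ≤ m) (u : Finset ℤ) (hu : ∀ n ∈ u, (m:ℝ) ≤ |(n:ℝ)|) :
    ∑ n ∈ u, ((n:ℝ)^2)⁻¹ ≤ 4/m := by
  classical
  have key : ∀ w : Finset ℤ, (∀ n ∈ w, 0 ≤ n) → (∀ n ∈ w, (m:ℝ) ≤ |(n:ℝ)|) →
      ∑ n ∈ w, ((n:ℝ)^2)⁻¹ ≤ 2/m := by
    intro w hw hwm
    have hinj : ∀ x ∈ w, ∀ y ∈ w, x.toNat = y.toNat → x = y := by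
      intro x hx y hy hxy
      have := Int.toNat_of_nonneg (hw x hx)
      have := Int.toNat_of_nonneg (hw y hy)
      omega
    have himg : ∑ k ∈ w.image Int.toNat, ((k:ℝ)^2)⁻¹ = ∑ n ∈ w, (((n.toNat:ℕ):ℝ)^2)⁻¹ :=
      Finset.sum_image hinj
    have hcongr : ∀ n ∈ w, (((n.toNat:ℕ):ℝ)^2)⁻¹ = ((n:ℝ)^2)⁻¹ := by
      intro n hn
      have h := Int.toNat_of_nonneg (hw n hn)
      congr 2
      exact_mod_cast congrArg (fun z : ℤ => (z:ℝ)) h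
    have heq : ∑ n ∈ w, ((n:ℝ)^2)⁻¹ = ∑ k ∈ w.image Int.toNat, ((k:ℝ)^2)⁻¹ := by
      rw [himg]; exact (Finset.sum_congr rfl hcongr).symm
    rw [heq]
    apply tail_nat m hm
    intro k hk
    obtain ⟨n, hn, rfl⟩ := Finset.mem_image.mp hk
    have h1 := hwm n hn
    have h2 := hw n hn
    have h3 : |(n:ℝ)| = ((n.toNat : ℕ) : ℝ) := by
      rw [abs_of_nonneg (by exact_mod_cast h2)]
      exact_mod_cast (congrArg (fun z : ℤ => (z:ℝ)) (Int.toNat_of_nonneg h2)).symm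
    rw [h3] at h1
    exact_mod_cast h1
  have hsplit := Finset.sum_filter_add_sum_filter_not u (fun n => 0 ≤ n) (fun n => ((n:ℝ)^2)⁻¹)
  have hpos : ∑ n ∈ u.filter (fun n => 0 ≤ n), ((n:ℝ)^2)⁻¹ ≤ 2/m := by
    apply key
    · intro n hn; exact (Finset.mem_filter.mp hn).2
    · intro n hn; exact hu n (Finset.mem_filter.mp hn).1
  have hneg : ∑ n ∈ u.filter (fun n => ¬ 0 ≤ n), ((n:ℝ)^2)⁻¹ ≤ 2/m := by
    have himg2 : ∑ n ∈ (u.filter (fun n => ¬ 0 ≤ n)).image (fun n => -n), ((n:ℝ)^2)⁻¹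
        = ∑ n ∈ u.filter (fun n => ¬ 0 ≤ n), (((-n:ℤ):ℝ)^2)⁻¹ := by
      apply Finset.sum_image
      intro x _ y _ h; simpa using h
    have : ∑ n ∈ u.filter (fun n => ¬ 0 ≤ n), ((n:ℝ)^2)⁻¹
        = ∑ n ∈ (u.filter (fun n => ¬ 0 ≤ n)).image (fun n => -n), ((n:ℝ)^2)⁻¹ := by
      rw [himg2]
      apply Finset.sum_congr rfl
      intro n _; push_cast; ring_nf
    rw [this]
    apply key
    · intro n hn
      obtain ⟨x, hx, rfl⟩ := Finset.mem_image.mp hn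
      have := (Finset.mem_filter.mp hx).2; omega
    · intro n hn
      obtain ⟨x, hx, rfl⟩ := Finset.mem_image.mp hn
      have := hu x (Finset.mem_filter.mp hx).1
      rwa [show ((-x:ℤ):ℝ) = -(x:ℝ) by push_cast; ring, abs_neg]
  have hnn : (0:ℝ) ≤ 2/m := by positivity
  calc ∑ n ∈ u, ((n:ℝ)^2)⁻¹
      = ∑ n ∈ u.filter (fun n => 0 ≤ n), ((n:ℝ)^2)⁻¹
        + ∑ n ∈ u.filter (fun n => ¬ 0 ≤ n), ((n:ℝ)^2)⁻¹ := hsplit.symm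
  _ ≤ 2/m + 2/m := add_le_add hpos hneg
  _ = 4/m := by ring

lemma card_bound (u : Finset ℤ) (r : ℝ) (hr : 0 ≤ r)
    (h : ∀ n ∈ u, n ≠ 0 ∧ |(n:ℝ)| ≤ r) : (u.card : ℝ) ≤ 2 * r := by
  have hK : (0:ℤ) ≤ ⌊r⌋ := Int.le_floor.mpr (by simpa using hr)
  have hsub : u ⊆ (Finset.Icc (-⌊r⌋) ⌊r⌋).erase 0 := by
    intro n hn
    obtain ⟨hn0, hnr⟩ := h n hn
    obtain ⟨ha, hb⟩ := abs_le.mp hnr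
    refine Finset.mem_erase.mpr ⟨hn0, Finset.mem_Icc.mpr ⟨?_, ?_⟩⟩
    · have : -n ≤ ⌊r⌋ := Int.le_floor.mpr (by push_cast; linarith)
      omega
    · exact Int.le_floor.mpr hb
  have hmem : (0:ℤ) ∈ Finset.Icc (-⌊r⌋) ⌊r⌋ := Finset.mem_Icc.mpr ⟨by omega, hK⟩
  have hcard : ((Finset.Icc (-⌊r⌋) ⌊r⌋).erase 0).card = (2*⌊r⌋).toNat := by
    rw [Finset.card_erase_of_mem hmem, Int.card_Icc]
    omega
  have h1 : (u.card : ℝ) ≤ (((Finset.Icc (-⌊r⌋) ⌊r⌋).erase 0).card : ℝ) := by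
    exact_mod_cast Finset.card_le_card hsub
  rw [hcard] at h1
  have h2 : (((2*⌊r⌋).toNat : ℕ) : ℝ) = ((2*⌊r⌋ : ℤ) : ℝ) := by
    exact_mod_cast congrArg (fun z : ℤ => (z:ℝ)) (Int.toNat_of_nonneg (by omega))
  rw [h2] at h1
  have h3 : ((⌊r⌋ : ℤ) : ℝ) ≤ r := Int.floor_le r
  calc (u.card : ℝ) ≤ ((2*⌊r⌋ : ℤ) : ℝ) := h1
  _ = 2 * ((⌊r⌋ : ℤ) : ℝ) := by push_cast; ring
  _ ≤ 2 * r := by linarith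



lemma natAbs_cast_real (n : ℤ) : ((n.natAbs : ℕ) : ℝ) = |(n:ℝ)| := by
  rw [Nat.cast_natAbs]; push_cast; ring

lemma one_le_abs_cast (n : ℤ) (h : n ≠ 0) : (1:ℝ) ≤ |(n:ℝ)| := by
  have h2 : (1:ℤ) ≤ |n| := Int.one_le_abs (by omega)
  calc (1:ℝ) = ((1:ℤ):ℝ) := by norm_num
  _ ≤ ((|n|:ℤ):ℝ) := by exact_mod_cast h2
  _ = |(n:ℝ)| := by push_cast; ring

set_option maxHeartbeats 1600000 in
lemma main_arith (M ℓ : ℝ) (hM : 0 ≤ M) (hl : 0 < ℓ) (hl2 : ℓ ≤ 2*π)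
    (β : ℤ → ℝ) (hβ0 : ∀ n, 0 ≤ β n)
    (hc : ∀ n : ℤ, |(n:ℝ)| * β n ≤ (2*π)⁻¹ * M * ℓ^2 * (n:ℝ)^2)
    (hB : ∀ v : Finset ℤ, (∑ n ∈ v, (β n)^2) ≤ (2*π)⁻¹ * ℓ * M^2)
    (u : Finset ℤ) (hu : ∀ n ∈ u, n ≠ 0) :
    ∑ n ∈ u, psi0 (|(n:ℝ)| * β n) / (n:ℝ)^2 ≤ 5000 * ℓ * psi0 M := by
  classical
  have hπ : 0 < π := Real.pi_pos
  have hπ3 : 3 < π := Real.pi_gt_three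
  have hL1 : 1 ≤ Real.log (Real.exp 1 + M) := one_le_loge M hM
  have hL0 : 0 < Real.log (Real.exp 1 + M) := by linarith
  set L := Real.log (Real.exp 1 + M) with hLdef
  have hpsiM : psi0 M = M / L := rfl
  have hpsiM0 : 0 ≤ psi0 M := psi0_nonneg M hM
  have hsqpos : 0 < Real.sqrt (Real.exp 1 + M) := by
    have := one_le_sqrt_eM M hM; linarith
  -- squares positive
  have hsq : ∀ n : ℤ, n ≠ 0 → (0:ℝ) < ((n:ℝ))^2 := by
    intro n hn
    have : ((n:ℝ)) ≠ 0 := Int.cast_ne_zero.mpr hn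
    positivity
  have ht0 : ∀ n : ℤ, 0 ≤ |(n:ℝ)| * β n := fun n => mul_nonneg (abs_nonneg _) (hβ0 n)
  -- Fact A
  have htA : ∀ n : ℤ, n ≠ 0 → psi0 (|(n:ℝ)| * β n) / (n:ℝ)^2 ≤ (2*π)⁻¹ * M * ℓ^2 := by
    intro n hn
    have h2 := hsq n hn
    have h1 : psi0 (|(n:ℝ)| * β n) ≤ (2*π)⁻¹ * M * ℓ^2 * (n:ℝ)^2 :=
      le_trans (psi0_le_self _ (ht0 n)) (hc n)
    rw [div_le_iff₀ h2]
    calc psi0 (|(n:ℝ)| * β n) ≤ (2*π)⁻¹ * M * ℓ^2 * (n:ℝ)^2 := h1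
    _ = (2*π)⁻¹ * M * ℓ^2 * (n:ℝ)^2 := by ring
  -- t/n² = β/|n|
  have htdiv : ∀ n : ℤ, n ≠ 0 → (|(n:ℝ)| * β n) / (n:ℝ)^2 = β n * (|(n:ℝ)|)⁻¹ := by
    intro n hn
    have h1 : (1:ℝ) ≤ |(n:ℝ)| := one_le_abs_cast n hn
    have h2 : (n:ℝ)^2 = |(n:ℝ)|^2 := (sq_abs _).symm
    have h3 : |(n:ℝ)| ≠ 0 := by intro h; rw [h] at h1; linarith
    rw [h2, sq, mul_div_mul_left _ _ h3, div_eq_mul_inv]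
  -- tail setup
  have hN0 : (0:ℝ) < 1/ℓ := by positivity
  have hm1 : 1 ≤ ⌊(1/ℓ : ℝ)⌋₊ + 1 := Nat.le_add_left 1 _
  have hmN : (1/ℓ : ℝ) ≤ ((⌊(1/ℓ : ℝ)⌋₊ + 1 : ℕ) : ℝ) := by
    push_cast
    exact le_of_lt (Nat.lt_floor_add_one _)
  have habs_ge : ∀ n : ℤ, (1/ℓ : ℝ) < |(n:ℝ)| → ((⌊(1/ℓ : ℝ)⌋₊ + 1 : ℕ) : ℝ) ≤ |(n:ℝ)| := by
    intro n hn
    rw [← natAbs_cast_real] at hn ⊢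
    have := (Nat.floor_lt hN0.le).mpr hn
    exact_mod_cast this
  have htail : ∀ v : Finset ℤ, (∀ n ∈ v, (1/ℓ : ℝ) < |(n:ℝ)|) →
      ∑ n ∈ v, ((n:ℝ)^2)⁻¹ ≤ 4*ℓ := by
    intro v hv
    have h1 := tail_int (⌊(1/ℓ : ℝ)⌋₊ + 1) hm1 v (fun n hn => habs_ge n (hv n hn))
    have hmpos : (0:ℝ) < ((⌊(1/ℓ : ℝ)⌋₊ + 1 : ℕ) : ℝ) := by positivity
    have h4 : 4/((⌊(1/ℓ : ℝ)⌋₊ + 1 : ℕ) : ℝ) ≤ 4*ℓ := by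
      rw [div_le_iff₀ hmpos]
      have hone : (1:ℝ) ≤ ℓ * ((⌊(1/ℓ : ℝ)⌋₊ + 1 : ℕ) : ℝ) := by
        calc (1:ℝ) = ℓ * (1/ℓ) := by field_simp
        _ ≤ ℓ * ((⌊(1/ℓ : ℝ)⌋₊ + 1 : ℕ) : ℝ) := by
            apply mul_le_mul_of_nonneg_left hmN (le_of_lt hl)
      nlinarith
    linarith
  -- Cauchy-Schwarz bound
  have hCS : ∀ v : Finset ℤ, (∀ n ∈ v, (1/ℓ : ℝ) < |(n:ℝ)|) →
      ∑ n ∈ v, β n * (|(n:ℝ)|)⁻¹ ≤ 2*ℓ*M := by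
    intro v hv
    have htl := htail v hv
    have hsqcs := Finset.sum_mul_sq_le_sq_mul_sq v (fun n => β n) (fun n => (|(n:ℝ)|)⁻¹)
    have h2 : ∑ n ∈ v, ((|(n:ℝ)|)⁻¹)^2 = ∑ n ∈ v, ((n:ℝ)^2)⁻¹ := by
      apply Finset.sum_congr rfl
      intro n _
      rw [inv_pow, sq_abs]
    have hβsum : ∑ n ∈ v, (β n)^2 ≤ (2*π)⁻¹*ℓ*M^2 := hB v
    have hβnn : 0 ≤ ∑ n ∈ v, (β n)^2 := Finset.sum_nonneg fun n _ => sq_nonneg _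
    have htlnn : 0 ≤ ∑ n ∈ v, ((n:ℝ)^2)⁻¹ := Finset.sum_nonneg fun n _ => by positivity
    have hnn : 0 ≤ ∑ n ∈ v, β n * (|(n:ℝ)|)⁻¹ := Finset.sum_nonneg fun n _ => by
      have := hβ0 n; positivity
    apply le_of_sq_le_sq' _ _ hnn (by positivity)
    have hinvpi : (2*π)⁻¹ ≤ (1:ℝ) := by
      rw [inv_le_one_iff₀]; right; linarith
    calc (∑ n ∈ v, β n * (|(n:ℝ)|)⁻¹)^2
        ≤ (∑ n ∈ v, (β n)^2) * (∑ n ∈ v, ((|(n:ℝ)|)⁻¹)^2) := hsqcs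
    _ = (∑ n ∈ v, (β n)^2) * (∑ n ∈ v, ((n:ℝ)^2)⁻¹) := by rw [h2]
    _ ≤ ((2*π)⁻¹*ℓ*M^2) * (4*ℓ) := by
        apply mul_le_mul hβsum htl htlnn (by positivity)
    _ ≤ (2*ℓ*M)^2 := by nlinarith [sq_nonneg (ℓ*M)]
  by_cases hM1 : 1 ≤ M
  · -- main case M ≥ 1
    have hM0' : (0:ℝ) < M := by linarith
    have hkey := key_const M hM1
    set D := L * Real.sqrt (Real.exp 1 + M) with hDdef
    have hD0 : 0 < D := by positivity
    set p1 : ℤ → Prop := fun n => (2*π)⁻¹ * M * ℓ^2 * (n:ℝ)^2 ≤ D with hp1def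
    set p2 : ℤ → Prop := fun n => |(n:ℝ)| ≤ 1/ℓ with hp2def
    set f : ℤ → ℝ := fun n => psi0 (|(n:ℝ)| * β n) / (n:ℝ)^2 with hfdef
    have hf0 : ∀ n : ℤ, n ≠ 0 → 0 ≤ f n :=
      fun n hn => div_nonneg (psi0_nonneg _ (ht0 n)) (le_of_lt (hsq n hn))
    have hsplit1 := Finset.sum_filter_add_sum_filter_not u p1 f
    have hsplit2 := Finset.sum_filter_add_sum_filter_not (u.filter (fun n => ¬ p1 n)) p2 f
    -- S1
    have hS1 : ∑ n ∈ u.filter p1, f n ≤ 27 * (ℓ * M / L) := by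
      have hrval : (0:ℝ) ≤ 2*π*D/(M*ℓ^2) := by positivity
      have hr2 : (Real.sqrt (2*π*D/(M*ℓ^2)))^2 = 2*π*D/(M*ℓ^2) := Real.sq_sqrt hrval
      have hDL : D * L^2 ≤ 1024 * M := by
        calc D * L^2 = L^3 * Real.sqrt (Real.exp 1 + M) := by rw [hDdef]; ring
        _ ≤ 1024 * M := hkey
      have hrle : Real.sqrt (2*π*D/(M*ℓ^2)) ≤ 27*π/(ℓ*L) := by
        apply le_of_sq_le_sq' _ _ (Real.sqrt_nonneg _) (by positivity)
        rw [hr2, div_pow, div_le_div_iff₀ (by positivity) (by positivity)]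
        have h1 : 2*π*ℓ^2*(D*L^2) ≤ 2*π*ℓ^2*(1024*M) :=
          mul_le_mul_of_nonneg_left hDL (by positivity)
        have h2 : 0 < π*(M*ℓ^2) := by positivity
        nlinarith [h1, h2, hπ3]
    -- card bound for u1
      have hcard : ((u.filter p1).card : ℝ) ≤ 2 * Real.sqrt (2*π*D/(M*ℓ^2)) := by
        apply card_bound _ _ (Real.sqrt_nonneg _)
        intro n hn
        obtain ⟨hnu, hnp⟩ := Finset.mem_filter.mp hn
        refine ⟨hu n hnu, ?_⟩
        have hn2 : (n:ℝ)^2 ≤ 2*π*D/(M*ℓ^2) := by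
          rw [le_div_iff₀ (by positivity)]
          have hineq : (2*π) * ((2*π)⁻¹ * M * ℓ^2 * (n:ℝ)^2) ≤ (2*π) * D :=
            mul_le_mul_of_nonneg_left hnp (by positivity)
          calc (n:ℝ)^2 * (M*ℓ^2) = (2*π) * ((2*π)⁻¹ * M * ℓ^2 * (n:ℝ)^2) := by
                field_simp
          _ ≤ (2*π) * D := hineq
          _ = 2*π*D := by ring
        calc |(n:ℝ)| = Real.sqrt ((n:ℝ)^2) := (Real.sqrt_sq_eq_abs _).symm
        _ ≤ Real.sqrt (2*π*D/(M*ℓ^2)) := Real.sqrt_le_sqrt hn2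
      have hsum := Finset.sum_le_card_nsmul (u.filter p1) f ((2*π)⁻¹ * M * ℓ^2)
        (fun n hn => htA n (hu n (Finset.mem_filter.mp hn).1))
      rw [nsmul_eq_mul] at hsum
      have hcnn : (0:ℝ) ≤ (2*π)⁻¹ * M * ℓ^2 := by positivity
      calc ∑ n ∈ u.filter p1, f n ≤ ((u.filter p1).card : ℝ) * ((2*π)⁻¹ * M * ℓ^2) := hsum
      _ ≤ (2 * (27*π/(ℓ*L))) * ((2*π)⁻¹ * M * ℓ^2) := by
          apply mul_le_mul _ le_rfl hcnn (by positivity)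
          calc ((u.filter p1).card : ℝ) ≤ 2 * Real.sqrt (2*π*D/(M*ℓ^2)) := hcard
          _ ≤ 2 * (27*π/(ℓ*L)) := by linarith
      _ = 27 * (ℓ * M / L) := by field_simp
    -- S2
    have hS2 : ∑ n ∈ (u.filter (fun n => ¬ p1 n)).filter p2, f n ≤ 2/π * (ℓ * M / L) := by
      have hterm : ∀ n ∈ (u.filter (fun n => ¬ p1 n)).filter p2,
          f n ≤ 2 * ((2*π)⁻¹ * M * ℓ^2) / L := by
        intro n hn
        obtain ⟨hn1, hn2⟩ := Finset.mem_filter.mp hn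
        obtain ⟨hnu, hnp1⟩ := Finset.mem_filter.mp hn1
        have hn0 := hu n hnu
        have hxD : D ≤ (2*π)⁻¹ * M * ℓ^2 * (n:ℝ)^2 := le_of_lt (not_le.mp hnp1)
        have hDx : L * Real.sqrt (Real.exp 1 + M) ≤ (2*π)⁻¹ * M * ℓ^2 * (n:ℝ)^2 := hxD
        have hpsi := psi0_le_two_div M (|(n:ℝ)| * β n) ((2*π)⁻¹ * M * ℓ^2 * (n:ℝ)^2)
          hM (ht0 n) (hc n) hDx
        have hn2pos := hsq n hn0
        calc f n = psi0 (|(n:ℝ)| * β n) / (n:ℝ)^2 := rfl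
        _ ≤ (2 * ((2*π)⁻¹ * M * ℓ^2 * (n:ℝ)^2) / L) / (n:ℝ)^2 :=
            (div_le_div_iff_of_pos_right hn2pos).mpr hpsi
        _ = 2 * ((2*π)⁻¹ * M * ℓ^2) / L := by field_simp
      have hcard : (((u.filter (fun n => ¬ p1 n)).filter p2).card : ℝ) ≤ 2 * (1/ℓ) := by
        apply card_bound _ _ (by positivity)
        intro n hn
        obtain ⟨hn1, hn2⟩ := Finset.mem_filter.mp hn
        exact ⟨hu n (Finset.mem_filter.mp hn1).1, hn2⟩
      have hsum := Finset.sum_le_card_nsmul ((u.filter (fun n => ¬ p1 n)).filter p2) f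
        (2 * ((2*π)⁻¹ * M * ℓ^2) / L) hterm
      rw [nsmul_eq_mul] at hsum
      calc ∑ n ∈ (u.filter (fun n => ¬ p1 n)).filter p2, f n
          ≤ (((u.filter (fun n => ¬ p1 n)).filter p2).card : ℝ) * (2 * ((2*π)⁻¹ * M * ℓ^2) / L) := hsum
      _ ≤ (2 * (1/ℓ)) * (2 * ((2*π)⁻¹ * M * ℓ^2) / L) := by
          apply mul_le_mul hcard le_rfl (by positivity) (by positivity)
      _ = 2/π * (ℓ * M / L) := by field_simp
    -- S3
    have hS3 : ∑ n ∈ (u.filter (fun n => ¬ p1 n)).filter (fun n => ¬ p2 n), f n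
        ≤ 4096 * (ℓ * M / L) + 4 * (ℓ * M / L) := by
      set v := (u.filter (fun n => ¬ p1 n)).filter (fun n => ¬ p2 n) with hvdef
      have hvN : ∀ n ∈ v, (1/ℓ : ℝ) < |(n:ℝ)| := by
        intro n hn
        have := (Finset.mem_filter.mp hn).2
        exact not_le.mp this
      have hv0 : ∀ n ∈ v, n ≠ 0 := by
        intro n hn
        exact hu n (Finset.mem_filter.mp (Finset.mem_filter.mp hn).1).1
      have hterm : ∀ n ∈ v, f n ≤ Real.sqrt (Real.exp 1 + M) * ((n:ℝ)^2)⁻¹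
          + (2/L) * (β n * (|(n:ℝ)|)⁻¹) := by
        intro n hn
        have hn0 := hv0 n hn
        have hn2pos := hsq n hn0
        have hpsi := psi0_le_add M (|(n:ℝ)| * β n) hM (ht0 n)
        have hd := htdiv n hn0
        calc f n = psi0 (|(n:ℝ)| * β n) / (n:ℝ)^2 := rfl
        _ ≤ (Real.sqrt (Real.exp 1 + M) + 2 * (|(n:ℝ)| * β n) / L) / (n:ℝ)^2 :=
            (div_le_div_iff_of_pos_right hn2pos).mpr hpsi
        _ = Real.sqrt (Real.exp 1 + M) * ((n:ℝ)^2)⁻¹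
            + (2/L) * ((|(n:ℝ)| * β n) / (n:ℝ)^2) := by field_simp
        _ = Real.sqrt (Real.exp 1 + M) * ((n:ℝ)^2)⁻¹ + (2/L) * (β n * (|(n:ℝ)|)⁻¹) := by
            rw [hd]
      have hsum1 : ∑ n ∈ v, f n ≤ Real.sqrt (Real.exp 1 + M) * (∑ n ∈ v, ((n:ℝ)^2)⁻¹)
          + (2/L) * (∑ n ∈ v, β n * (|(n:ℝ)|)⁻¹) := by
        calc ∑ n ∈ v, f n ≤ ∑ n ∈ v, (Real.sqrt (Real.exp 1 + M) * ((n:ℝ)^2)⁻¹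
            + (2/L) * (β n * (|(n:ℝ)|)⁻¹)) := Finset.sum_le_sum hterm
        _ = _ := by rw [Finset.sum_add_distrib, Finset.mul_sum, Finset.mul_sum]
      have htl := htail v hvN
      have hcs := hCS v hvN
      have hsqM : Real.sqrt (Real.exp 1 + M) ≤ 1024 * M / L := by
        rw [le_div_iff₀ hL0]
        have hLL3 : L ≤ L^3 := by nlinarith [mul_nonneg (mul_nonneg hL0.le (sub_nonneg.mpr hL1)) (show (0:ℝ) ≤ L + 1 by linarith)]
        calc Real.sqrt (Real.exp 1 + M) * L ≤ Real.sqrt (Real.exp 1 + M) * L^3 := by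
              apply mul_le_mul_of_nonneg_left hLL3 (Real.sqrt_nonneg _)
        _ = L^3 * Real.sqrt (Real.exp 1 + M) := by ring
        _ ≤ 1024 * M := hkey
      have htlnn : 0 ≤ ∑ n ∈ v, ((n:ℝ)^2)⁻¹ := Finset.sum_nonneg fun n _ => by positivity
      have hcsnn : 0 ≤ ∑ n ∈ v, β n * (|(n:ℝ)|)⁻¹ := Finset.sum_nonneg fun n _ => by
        have := hβ0 n; positivity
      calc ∑ n ∈ v, f n ≤ Real.sqrt (Real.exp 1 + M) * (∑ n ∈ v, ((n:ℝ)^2)⁻¹)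
          + (2/L) * (∑ n ∈ v, β n * (|(n:ℝ)|)⁻¹) := hsum1
      _ ≤ (1024 * M / L) * (4*ℓ) + (2/L) * (2*ℓ*M) := by
          apply add_le_add
          · apply mul_le_mul hsqM htl htlnn (by positivity)
          · apply mul_le_mul_of_nonneg_left hcs (by positivity)
      _ = 4096 * (ℓ * M / L) + 4 * (ℓ * M / L) := by field_simp; ring
    -- combine
    have hfinal : ∑ n ∈ u, f n ≤ 4128 * (ℓ * M / L) := by
      have h2pi : 2/π * (ℓ * M / L) ≤ 1 * (ℓ * M / L) := by
        apply mul_le_mul _ le_rfl (by positivity) (by norm_num)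
        rw [div_le_iff₀ hπ]; linarith
      calc ∑ n ∈ u, f n = (∑ n ∈ u.filter p1, f n)
          + ((∑ n ∈ (u.filter (fun n => ¬ p1 n)).filter p2, f n)
          + (∑ n ∈ (u.filter (fun n => ¬ p1 n)).filter (fun n => ¬ p2 n), f n)) := by
            rw [← hsplit1, ← hsplit2]
      _ ≤ 27 * (ℓ * M / L) + (2/π * (ℓ * M / L) + (4096 * (ℓ * M / L) + 4 * (ℓ * M / L))) := by
            apply add_le_add hS1 (add_le_add hS2 hS3)
      _ ≤ 4128 * (ℓ * M / L) := by
            have hx0 : (0:ℝ) ≤ ℓ * M / L := by positivity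
            linarith
    calc ∑ n ∈ u, f n ≤ 4128 * (ℓ * M / L) := hfinal
    _ = 4128 * ℓ * psi0 M := by rw [hpsiM]; ring
    _ ≤ 5000 * ℓ * psi0 M := by nlinarith [mul_nonneg hl.le hpsiM0]
  · -- case M < 1
    push_neg at hM1
    set p2 : ℤ → Prop := fun n => |(n:ℝ)| ≤ 1/ℓ with hp2def
    set f : ℤ → ℝ := fun n => psi0 (|(n:ℝ)| * β n) / (n:ℝ)^2 with hfdef
    have hsplit := Finset.sum_filter_add_sum_filter_not u p2 f
    have hSsmall : ∑ n ∈ u.filter p2, f n ≤ (1/π) * ℓ * M := by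
      have hcard : ((u.filter p2).card : ℝ) ≤ 2 * (1/ℓ) := by
        apply card_bound _ _ (by positivity)
        intro n hn
        obtain ⟨hnu, hnp⟩ := Finset.mem_filter.mp hn
        exact ⟨hu n hnu, hnp⟩
      have hsum := Finset.sum_le_card_nsmul (u.filter p2) f ((2*π)⁻¹ * M * ℓ^2)
        (fun n hn => htA n (hu n (Finset.mem_filter.mp hn).1))
      rw [nsmul_eq_mul] at hsum
      calc ∑ n ∈ u.filter p2, f n ≤ ((u.filter p2).card : ℝ) * ((2*π)⁻¹ * M * ℓ^2) := hsum
      _ ≤ (2 * (1/ℓ)) * ((2*π)⁻¹ * M * ℓ^2) := by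
          apply mul_le_mul hcard le_rfl (by positivity) (by positivity)
      _ = (1/π) * ℓ * M := by field_simp
    have hSlarge : ∑ n ∈ u.filter (fun n => ¬ p2 n), f n ≤ 2*ℓ*M := by
      have hvN : ∀ n ∈ u.filter (fun n => ¬ p2 n), (1/ℓ : ℝ) < |(n:ℝ)| := by
        intro n hn
        exact not_le.mp (Finset.mem_filter.mp hn).2
      have hterm : ∀ n ∈ u.filter (fun n => ¬ p2 n), f n ≤ β n * (|(n:ℝ)|)⁻¹ := by
        intro n hn
        have hn0 := hu n (Finset.mem_filter.mp hn).1
        have hn2pos := hsq n hn0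
        have hd := htdiv n hn0
        calc f n = psi0 (|(n:ℝ)| * β n) / (n:ℝ)^2 := rfl
        _ ≤ (|(n:ℝ)| * β n) / (n:ℝ)^2 :=
            (div_le_div_iff_of_pos_right hn2pos).mpr (psi0_le_self _ (ht0 n))
        _ = β n * (|(n:ℝ)|)⁻¹ := hd
      calc ∑ n ∈ u.filter (fun n => ¬ p2 n), f n
          ≤ ∑ n ∈ u.filter (fun n => ¬ p2 n), β n * (|(n:ℝ)|)⁻¹ := Finset.sum_le_sum hterm
      _ ≤ 2*ℓ*M := hCS _ hvN
    have hL2 : L ≤ 2 := by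
      have he2 : Real.exp 1 + M ≤ Real.exp 1 + 1 := by linarith
      have h1 : L ≤ Real.log (Real.exp 1 + 1) := by
        rw [hLdef]
        exact Real.log_le_log (by positivity) he2
      have h2 : Real.log (Real.exp 1 + 1) ≤ 2 := by
        have h3 : Real.exp 1 + 1 ≤ Real.exp 2 := by
          have h4 : Real.exp 2 = Real.exp 1 * Real.exp 1 := by
            rw [← Real.exp_add]; norm_num
          nlinarith [Real.exp_one_gt_d9]
        calc Real.log (Real.exp 1 + 1) ≤ Real.log (Real.exp 2) :=
          Real.log_le_log (by positivity) h3
        _ = 2 := Real.log_exp 2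
      linarith
    have hMpsi : M ≤ 2 * psi0 M := by
      rw [hpsiM]
      have h1 : M / 2 ≤ M / L := div_le_div_of_nonneg_left hM hL0 hL2
      linarith
    calc ∑ n ∈ u, f n = ∑ n ∈ u.filter p2, f n + ∑ n ∈ u.filter (fun n => ¬ p2 n), f n :=
          hsplit.symm
    _ ≤ (1/π) * ℓ * M + 2*ℓ*M := add_le_add hSsmall hSlarge
    _ ≤ 3*ℓ*M := by
        have h2pi : (1/π) ≤ 1 := by rw [div_le_one hπ]; linarith
        have hlM : (0:ℝ) ≤ ℓ*M := mul_nonneg hl.le hM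
        nlinarith [h2pi, hlM]
    _ ≤ 5000 * ℓ * psi0 M := by
        have h6 : ℓ * M ≤ ℓ * (2 * psi0 M) := mul_le_mul_of_nonneg_left hMpsi hl.le
        have h7 : (0:ℝ) ≤ ℓ * psi0 M := mul_nonneg hl.le hpsiM0
        nlinarith [h6, h7]


/-- bounded a.e. measurable functions are interval integrable -/
lemma intIntBdd {E : Type*} [NormedAddCommGroup E] (f : ℝ → E)
    (hf : AEStronglyMeasurable f volume) (B : ℝ) (hB : ∀ᵐ θ, ‖f θ‖ ≤ B) (x y : ℝ) :
    IntervalIntegrable f volume x y := by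
  rw [intervalIntegrable_iff]
  refine ⟨hf.restrict, ?_⟩
  haveI : IsFiniteMeasure (volume.restrict (Set.uIoc x y)) := by
    constructor
    rw [Measure.restrict_apply_univ, Set.uIoc, Real.volume_Ioc]
    exact ENNReal.ofReal_lt_top
  exact HasFiniteIntegral.of_bounded (ae_restrict_of_ae hB)

lemma intIntMul (a : ℝ → ℂ) (ha : Measurable a) (M : ℝ) (hae : ∀ᵐ θ, ‖a θ‖ ≤ M)
    (φ : ℝ → ℂ) (hφ : Measurable φ) (B : ℝ) (hB0 : 0 ≤ B) (hB : ∀ᵐ θ, ‖φ θ‖ ≤ B) (x y : ℝ) :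
    IntervalIntegrable (fun θ => a θ * φ θ) volume x y := by
  apply intIntBdd _ ((ha.mul hφ).aestronglyMeasurable) (M * B)
  filter_upwards [hae, hB] with θ h1 h2
  rw [Pi.mul_apply, norm_mul]
  exact mul_le_mul h1 h2 (norm_nonneg _) (le_trans (norm_nonneg _) h1)

/-- |e^{ix} - e^{iy}| ≤ |x-y| -/
lemma expdiff (x y : ℝ) :
    ‖Complex.exp (Complex.I * x) - Complex.exp (Complex.I * y)‖ ≤ |x - y| := by
  have hI : (Complex.I : ℂ) ≠ 0 := Complex.I_ne_zero
  have h1 : ∫ t in y..x, Complex.exp (Complex.I * t) =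
      (Complex.exp (Complex.I * x) - Complex.exp (Complex.I * y)) / Complex.I :=
    integral_exp_mul_complex hI
  have h2 : Complex.exp (Complex.I * x) - Complex.exp (Complex.I * y) =
      Complex.I * ∫ t in y..x, Complex.exp (Complex.I * t) := by
    rw [h1, mul_comm Complex.I
      ((Complex.exp (Complex.I * x) - Complex.exp (Complex.I * y)) / Complex.I),
      div_mul_cancel₀ _ hI]
  rw [h2, norm_mul, Complex.norm_I, one_mul]
  have h3 : ‖∫ t in y..x, Complex.exp (Complex.I * t)‖ ≤ 1 * |x - y| := by
    apply intervalIntegral.norm_integral_le_of_norm_le_const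
    intro t _
    rw [show Complex.I * (t:ℂ) = ((t:ℝ):ℂ) * Complex.I by ring,
      Complex.norm_exp_ofReal_mul_I]
  rwa [one_mul] at h3

/-- shift the integral of a periodic function with support condition -/
lemma shift_supp {E : Type*} [NormedAddCommGroup E] [NormedSpace ℝ E] (f : ℝ → E)
    (c ℓ : ℝ) (hl : 0 < ℓ) (hl2 : ℓ ≤ 2*π)
    (hper : Function.Periodic f (2*π)) (hint : ∀ x y, IntervalIntegrable f volume x y)
    (hz : ∀ θ ∈ Set.Ico (c+ℓ) (c+2*π), f θ = 0) :
    ∫ θ in (0:ℝ)..(2*π), f θ = ∫ θ in c..(c+ℓ), f θ := by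
  have h1 : ∫ θ in (0:ℝ)..(2*π), f θ = ∫ θ in c..(c+2*π), f θ := by
    have := hper.intervalIntegral_add_eq 0 c
    simpa using this
  have h3 : ∫ θ in (c+ℓ)..(c+2*π), f θ = 0 := by
    rw [intervalIntegral.integral_of_le (by linarith)]
    apply MeasureTheory.integral_eq_zero_of_ae
    rw [Filter.EventuallyEq, ae_restrict_iff' measurableSet_Ioc]
    have hne : ∀ᵐ (θ:ℝ), θ ≠ c+2*π := by
      have hsing : volume ({c+2*π} : Set ℝ) = 0 := measure_singleton _
      rw [ae_iff]
      simpa using hsing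
    filter_upwards [hne] with θ hθ hmem
    exact hz θ ⟨le_of_lt hmem.1, lt_of_le_of_ne hmem.2 hθ⟩
  have h2 : (∫ θ in c..(c+ℓ), f θ) + (∫ θ in (c+ℓ)..(c+2*π), f θ) = ∫ θ in c..(c+2*π), f θ :=
    intervalIntegral.integral_add_adjacent_intervals (hint _ _) (hint _ _)
  rw [h1, ← h2, h3, add_zero]

lemma interval_norm_bound {E : Type*} [NormedAddCommGroup E] [NormedSpace ℝ E]
    (f : ℝ → E) (x y B : ℝ) (hxy : x ≤ y)
    (hae : ∀ᵐ θ, θ ∈ Set.Ioc x y → ‖f θ‖ ≤ B) :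
    ‖∫ θ in x..y, f θ‖ ≤ B * (y - x) := by
  rw [intervalIntegral.integral_of_le hxy]
  have hlt : volume (Set.Ioc x y) < ⊤ := by rw [Real.volume_Ioc]; exact ENNReal.ofReal_lt_top
  have hb : ∀ᵐ θ ∂(volume.restrict (Set.Ioc x y)), ‖f θ‖ ≤ B := by
    rw [ae_restrict_iff' measurableSet_Ioc]; exact hae
  have := MeasureTheory.norm_setIntegral_le_of_norm_le_const_ae hlt hb
  rwa [Real.volume_real_Ioc_of_le hxy] at this

/-- orthogonality -/
lemma horth (k : ℤ) :
    ∫ θ in (0:ℝ)..(2*π), Complex.exp (Complex.I * k * θ) =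
      if k = 0 then ((2*π : ℝ):ℂ) else 0 := by
  by_cases hk : k = 0
  · subst hk
    simp only [Int.cast_zero, mul_zero, zero_mul, Complex.exp_zero]
    rw [intervalIntegral.integral_const]
    push_cast
    simp [sub_zero]
  · rw [if_neg hk]
    have hc : (Complex.I * (k:ℂ)) ≠ 0 := by simp [Complex.I_ne_zero, hk]
    have h1 : ∀ θ : ℝ, Complex.I * k * (θ:ℂ) = (Complex.I * k) * (θ:ℂ) := fun θ => by ring
    rw [show (fun θ : ℝ => Complex.exp (Complex.I * k * θ))
        = fun θ : ℝ => Complex.exp ((Complex.I * k) * θ) from rfl]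
    rw [integral_exp_mul_complex hc]
    have h2 : Complex.I * k * ((2*π : ℝ):ℂ) = (k:ℂ) * (2 * (π:ℂ) * Complex.I) := by
      push_cast; ring
    rw [h2, Complex.exp_int_mul_two_pi_mul_I]
    simp




lemma intervalIntegral_conj (f : ℝ → ℂ) (x y : ℝ) :
    ∫ t in x..y, (starRingEnd ℂ) (f t) = (starRingEnd ℂ) (∫ t in x..y, f t) := by
  simp only [intervalIntegral, integral_conj]
  rw [map_sub]

lemma norm_exp_I_mul (n : ℤ) (θ : ℝ) : ‖Complex.exp (Complex.I * n * θ)‖ = 1 := by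
  rw [show Complex.I * (n:ℂ) * (θ:ℂ) = (((n:ℝ)*θ : ℝ):ℂ) * Complex.I by push_cast; ring,
    Complex.norm_exp_ofReal_mul_I]

lemma norm_exp_neg_I_mul (n : ℤ) (θ : ℝ) : ‖Complex.exp (-Complex.I * n * θ)‖ = 1 := by
  rw [show -Complex.I * (n:ℂ) * (θ:ℂ) = ((-(n:ℝ)*θ : ℝ):ℂ) * Complex.I by push_cast; ring,
    Complex.norm_exp_ofReal_mul_I]

lemma conj_exp_I_mul (n : ℤ) (θ : ℝ) :
    (starRingEnd ℂ) (Complex.exp (Complex.I * n * θ)) = Complex.exp (-Complex.I * n * θ) := by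
  rw [← Complex.exp_conj]
  congr 1
  simp [map_mul, Complex.conj_I]

lemma conj_exp_neg_I_mul (n : ℤ) (θ : ℝ) :
    (starRingEnd ℂ) (Complex.exp (-Complex.I * n * θ)) = Complex.exp (Complex.I * n * θ) := by
  rw [← Complex.exp_conj]
  congr 1
  simp [map_mul, Complex.conj_I]

lemma exp_measurable (n : ℤ) : Measurable (fun θ : ℝ => Complex.exp (-Complex.I * n * θ)) :=
  (Complex.continuous_exp.comp (continuous_const.mul Complex.continuous_ofReal)).measurable

lemma exp_measurable' (n : ℤ) : Measurable (fun θ : ℝ => Complex.exp (Complex.I * n * θ)) :=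
  (Complex.continuous_exp.comp (continuous_const.mul Complex.continuous_ofReal)).measurable

lemma exp_periodic (n : ℤ) :
    Function.Periodic (fun θ : ℝ => Complex.exp (-Complex.I * n * θ)) (2*π) := by
  intro θ
  simp only
  rw [show (-Complex.I*(n:ℂ)*((θ+2*π:ℝ):ℂ)) = -Complex.I*n*θ + ((-n:ℤ):ℂ)*(2*(π:ℂ)*Complex.I)
      by push_cast; ring,
    Complex.exp_add, Complex.exp_int_mul_two_pi_mul_I, mul_one]


section atom

variable (a : ℝ → ℂ) (c ℓ M : ℝ)

lemma coeff_cancel (ha : Measurable a) (hper : Function.Periodic a (2*π))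
    (hl : 0 < ℓ) (hl2 : ℓ ≤ 2*π)
    (hz : ∀ θ ∈ Set.Ico (c+ℓ) (c+2*π), a θ = 0)
    (hM : 0 ≤ M) (hae : ∀ᵐ θ, ‖a θ‖ ≤ M)
    (hmean : (∫ θ in (0:ℝ)..(2*π), a θ) = 0) (n : ℤ) :
    ‖fourierCoeffT a n‖ ≤ (2*π)⁻¹ * M * ℓ^2 * |(n:ℝ)| := by
  have hπ : 0 < π := Real.pi_pos
  have hT0 : ((2*π:ℝ):ℂ) ≠ 0 := by
    simp only [ne_eq, Complex.ofReal_eq_zero]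
    positivity
  -- integrability
  have hintn : ∀ (k : ℤ) (x y : ℝ),
      IntervalIntegrable (fun θ => a θ * Complex.exp (-Complex.I * k * θ)) volume x y := by
    intro k x y
    exact intIntMul a ha M hae _ (exp_measurable k) 1 zero_le_one
      (Filter.Eventually.of_forall (fun θ => le_of_eq (norm_exp_neg_I_mul k θ))) x y
  have hinta : ∀ x y : ℝ, IntervalIntegrable a volume x y := fun x y =>
    intIntBdd a ha.aestronglyMeasurable M hae x y
  -- periodicity of integrand
  have hper' : Function.Periodic (fun θ => a θ * Complex.exp (-Complex.I * n * θ)) (2*π) := by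
    intro θ
    simp only
    rw [hper θ]
    congr 1
    exact exp_periodic n θ
  -- shift
  have hshift : ∫ θ in (0:ℝ)..(2*π), a θ * Complex.exp (-Complex.I * n * θ)
      = ∫ θ in c..(c+ℓ), a θ * Complex.exp (-Complex.I * n * θ) := by
    apply shift_supp _ c ℓ hl hl2 hper' (hintn n)
    intro θ hθ
    rw [hz θ hθ, zero_mul]
  have hmean' : (∫ θ in c..(c+ℓ), a θ) = 0 := by
    rw [← shift_supp a c ℓ hl hl2 hper hinta hz]
    exact hmean
  -- key identity
  have hkey : ((2*π:ℝ):ℂ) * fourierCoeffT a n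
      = ∫ θ in c..(c+ℓ), a θ * (Complex.exp (-Complex.I * n * θ)
        - Complex.exp (-Complex.I * n * c)) := by
    have h1 : ∫ θ in c..(c+ℓ), a θ * (Complex.exp (-Complex.I * n * θ)
        - Complex.exp (-Complex.I * n * c))
        = (∫ θ in c..(c+ℓ), a θ * Complex.exp (-Complex.I * n * θ))
          - ∫ θ in c..(c+ℓ), a θ * Complex.exp (-Complex.I * n * c) := by
      rw [← intervalIntegral.integral_sub (hintn n c (c+ℓ))
        ((hinta c (c+ℓ)).mul_const _)]
      apply intervalIntegral.integral_congr
      intro θ _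
      ring
    have h2 : ∫ θ in c..(c+ℓ), a θ * Complex.exp (-Complex.I * n * c)
        = (∫ θ in c..(c+ℓ), a θ) * Complex.exp (-Complex.I * n * c) :=
      intervalIntegral.integral_mul_const _ _
    rw [h1, h2, hmean', zero_mul, sub_zero, ← hshift]
    rw [fourierCoeffT]
    rw [show (2 * Real.pi : ℂ) = ((2*π:ℝ):ℂ) by push_cast; ring]
    rw [← mul_assoc, mul_inv_cancel₀ hT0, one_mul]
  -- bound
  have hbound : ‖∫ θ in c..(c+ℓ), a θ * (Complex.exp (-Complex.I * n * θ)
      - Complex.exp (-Complex.I * n * c))‖ ≤ (M * (|(n:ℝ)| * ℓ)) * ((c+ℓ) - c) := by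
    apply interval_norm_bound _ _ _ _ (by linarith)
    filter_upwards [hae] with θ h1 hmem
    rw [norm_mul]
    have h2 : ‖Complex.exp (-Complex.I * n * θ) - Complex.exp (-Complex.I * n * c)‖
        ≤ |(n:ℝ)| * ℓ := by
      have h3 := expdiff (-(n:ℝ)*θ) (-(n:ℝ)*c)
      rw [show (Complex.I * ((-(n:ℝ)*θ : ℝ):ℂ)) = -Complex.I * n * θ by push_cast; ring,
        show (Complex.I * ((-(n:ℝ)*c : ℝ):ℂ)) = -Complex.I * n * c by push_cast; ring] at h3
      calc ‖Complex.exp (-Complex.I * n * θ) - Complex.exp (-Complex.I * n * c)‖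
          ≤ |(-(n:ℝ)*θ) - (-(n:ℝ)*c)| := h3
      _ = |(n:ℝ)| * |θ - c| := by rw [show (-(n:ℝ)*θ) - (-(n:ℝ)*c) = -((n:ℝ)*(θ - c)) by ring,
            abs_neg, abs_mul]
      _ ≤ |(n:ℝ)| * ℓ := by
          apply mul_le_mul_of_nonneg_left _ (abs_nonneg _)
          rw [abs_of_nonneg (by linarith [hmem.1] : (0:ℝ) ≤ θ - c)]
          linarith [hmem.2]
    exact mul_le_mul h1 h2 (norm_nonneg _) hM
  have hnorm : ‖((2*π:ℝ):ℂ) * fourierCoeffT a n‖ = (2*π) * ‖fourierCoeffT a n‖ := by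
    rw [norm_mul, Complex.norm_real, Real.norm_eq_abs, abs_of_pos (by positivity)]
  rw [hkey] at hnorm
  have hfinal : (2*π) * ‖fourierCoeffT a n‖ ≤ M * (|(n:ℝ)| * ℓ) * ℓ := by
    rw [← hnorm]
    calc ‖_‖ ≤ (M * (|(n:ℝ)| * ℓ)) * ((c+ℓ) - c) := hbound
    _ = M * (|(n:ℝ)| * ℓ) * ℓ := by ring
  calc ‖fourierCoeffT a n‖ = (2*π)⁻¹ * ((2*π) * ‖fourierCoeffT a n‖) := by
        field_simp
  _ ≤ (2*π)⁻¹ * (M * (|(n:ℝ)| * ℓ) * ℓ) := by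
        apply mul_le_mul_of_nonneg_left hfinal (by positivity)
  _ = (2*π)⁻¹ * M * ℓ^2 * |(n:ℝ)| := by ring

set_option maxHeartbeats 1600000 in
lemma bessel_bound (ha : Measurable a) (hper : Function.Periodic a (2*π))
    (hl : 0 < ℓ) (hl2 : ℓ ≤ 2*π)
    (hz : ∀ θ ∈ Set.Ico (c+ℓ) (c+2*π), a θ = 0)
    (hM : 0 ≤ M) (hae : ∀ᵐ θ, ‖a θ‖ ≤ M)
    (v : Finset ℤ) :
    ∑ n ∈ v, ‖fourierCoeffT a n‖^2 ≤ (2*π)⁻¹ * ℓ * M^2 := by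
  classical
  have hπ : 0 < π := Real.pi_pos
  have hT0 : ((2*π:ℝ):ℂ) ≠ 0 := by
    simp only [ne_eq, Complex.ofReal_eq_zero]; positivity
  set b : ℤ → ℂ := fun n => fourierCoeffT a n with hbdef
  set P : ℝ → ℂ := fun θ => ∑ n ∈ v, b n * Complex.exp (Complex.I * n * θ) with hPdef
  have hPcont : Continuous P := by
    apply continuous_finset_sum
    intro n _
    exact continuous_const.mul
      (Complex.continuous_exp.comp (continuous_const.mul Complex.continuous_ofReal))
  have hPbd : ∀ θ, ‖P θ‖ ≤ ∑ n ∈ v, ‖b n‖ := by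
    intro θ
    calc ‖P θ‖ ≤ ∑ n ∈ v, ‖b n * Complex.exp (Complex.I * n * θ)‖ := norm_sum_le _ _
    _ = ∑ n ∈ v, ‖b n‖ := by
        apply Finset.sum_congr rfl
        intro n _
        rw [norm_mul, norm_exp_I_mul, mul_one]
  have hBP0 : 0 ≤ ∑ n ∈ v, ‖b n‖ := Finset.sum_nonneg fun n _ => norm_nonneg _
  have hconja_meas : Measurable (fun θ => (starRingEnd ℂ) (a θ)) :=
    Complex.continuous_conj.measurable.comp ha
  have hconja_ae : ∀ᵐ θ, ‖(starRingEnd ℂ) (a θ)‖ ≤ M := by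
    filter_upwards [hae] with θ h
    rwa [Complex.norm_conj]
  have hcoeff : ∀ k : ℤ, (∫ θ in (0:ℝ)..(2*π), a θ * Complex.exp (-Complex.I*k*θ))
      = ((2*π:ℝ):ℂ) * b k := by
    intro k
    rw [hbdef]
    simp only [fourierCoeffT]
    rw [show (2 * Real.pi : ℂ) = ((2*π:ℝ):ℂ) by push_cast; ring, ← mul_assoc,
      mul_inv_cancel₀ hT0, one_mul]
  have hconjP : ∀ θ : ℝ, (starRingEnd ℂ) (P θ)
      = ∑ n ∈ v, (starRingEnd ℂ) (b n) * Complex.exp (-Complex.I * n * θ) := by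
    intro θ
    rw [hPdef]
    simp only
    rw [map_sum]
    apply Finset.sum_congr rfl
    intro n _
    rw [map_mul, conj_exp_I_mul]
  have hintn : ∀ (k : ℤ) (x y : ℝ),
      IntervalIntegrable (fun θ => a θ * Complex.exp (-Complex.I * k * θ)) volume x y :=
    fun k x y => intIntMul a ha M hae _ (exp_measurable k) 1 zero_le_one
      (Filter.Eventually.of_forall fun θ => le_of_eq (norm_exp_neg_I_mul k θ)) x y
  have hIexpconj : ∀ (k : ℤ) (x y : ℝ),
      IntervalIntegrable (fun θ : ℝ => Complex.exp (Complex.I * k * θ) * (starRingEnd ℂ) (a θ))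
        volume x y := by
    intro k x y
    have h := intIntMul (fun θ => (starRingEnd ℂ) (a θ)) hconja_meas M hconja_ae
      (fun θ : ℝ => Complex.exp (Complex.I * k * θ)) (exp_measurable' k) 1 zero_le_one
      (Filter.Eventually.of_forall fun θ => le_of_eq (norm_exp_I_mul k θ)) x y
    have heq : (fun θ : ℝ => Complex.exp (Complex.I * k * θ) * (starRingEnd ℂ) (a θ))
        = (fun θ : ℝ => (starRingEnd ℂ) (a θ) * Complex.exp (Complex.I * k * θ)) :=
      funext fun θ => mul_comm _ _
    rw [heq]
    exact h
  have hI1 : IntervalIntegrable (fun θ => a θ * (starRingEnd ℂ) (a θ)) volume 0 (2*π) :=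
    intIntMul a ha M hae _ hconja_meas M hM hconja_ae 0 (2*π)
  have hconjP_meas : Measurable (fun θ => (starRingEnd ℂ) (P θ)) :=
    Complex.continuous_conj.measurable.comp hPcont.measurable
  have hconjP_bd : ∀ θ, ‖(starRingEnd ℂ) (P θ)‖ ≤ ∑ n ∈ v, ‖b n‖ := by
    intro θ
    rw [Complex.norm_conj]
    exact hPbd θ
  have hI2 : IntervalIntegrable (fun θ => a θ * (starRingEnd ℂ) (P θ)) volume 0 (2*π) :=
    intIntMul a ha M hae (fun θ => (starRingEnd ℂ) (P θ)) hconjP_meas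
      _ hBP0 (Filter.Eventually.of_forall hconjP_bd) 0 (2*π)
  have hI3 : IntervalIntegrable (fun θ => P θ * (starRingEnd ℂ) (a θ)) volume 0 (2*π) := by
    have h := intIntMul (fun θ => (starRingEnd ℂ) (a θ)) hconja_meas M hconja_ae P
      hPcont.measurable _ hBP0 (Filter.Eventually.of_forall hPbd) 0 (2*π)
    have heq : (fun θ => P θ * (starRingEnd ℂ) (a θ))
        = (fun θ => (starRingEnd ℂ) (a θ) * P θ) := funext fun θ => mul_comm _ _
    rw [heq]
    exact h
  have hI4 : IntervalIntegrable (fun θ => P θ * (starRingEnd ℂ) (P θ)) volume 0 (2*π) :=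
    (hPcont.mul (Complex.continuous_conj.comp hPcont)).intervalIntegrable 0 (2*π)
  -- values
  have hval1 : (∫ θ in (0:ℝ)..(2*π), a θ * (starRingEnd ℂ) (a θ))
      = (((∫ θ in (0:ℝ)..(2*π), Complex.normSq (a θ)) : ℝ):ℂ) := by
    rw [← intervalIntegral.integral_ofReal]
    apply intervalIntegral.integral_congr
    intro θ _
    exact Complex.mul_conj _
  have hval2 : (∫ θ in (0:ℝ)..(2*π), a θ * (starRingEnd ℂ) (P θ))
      = ((2*π:ℝ):ℂ) * ∑ n ∈ v, ((Complex.normSq (b n) : ℝ):ℂ) := by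
    have h1 : ∀ θ : ℝ, a θ * (starRingEnd ℂ) (P θ)
        = ∑ n ∈ v, (starRingEnd ℂ) (b n) * (a θ * Complex.exp (-Complex.I * n * θ)) := by
      intro θ
      rw [hconjP θ, Finset.mul_sum]
      apply Finset.sum_congr rfl
      intro n _
      ring
    rw [intervalIntegral.integral_congr (fun θ _ => h1 θ),
      intervalIntegral.integral_finset_sum (fun n _ => (hintn n 0 (2*π)).const_mul _)]
    have h2 : ∀ n ∈ v, (∫ θ in (0:ℝ)..(2*π),
        (starRingEnd ℂ) (b n) * (a θ * Complex.exp (-Complex.I * n * θ)))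
        = ((2*π:ℝ):ℂ) * ((Complex.normSq (b n):ℝ):ℂ) := by
      intro n _
      rw [intervalIntegral.integral_const_mul, hcoeff n]
      calc (starRingEnd ℂ) (b n) * (((2*π:ℝ):ℂ) * b n)
          = ((2*π:ℝ):ℂ) * (b n * (starRingEnd ℂ) (b n)) := by ring
      _ = ((2*π:ℝ):ℂ) * ((Complex.normSq (b n):ℝ):ℂ) := by rw [Complex.mul_conj]
    rw [Finset.sum_congr rfl h2, ← Finset.mul_sum]
  have hconjint : ∀ k : ℤ, (∫ θ in (0:ℝ)..(2*π),
      Complex.exp (Complex.I*k*θ) * (starRingEnd ℂ) (a θ))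
      = (starRingEnd ℂ) (((2*π:ℝ):ℂ) * b k) := by
    intro k
    rw [← hcoeff k, ← intervalIntegral_conj]
    apply intervalIntegral.integral_congr
    intro θ _
    simp only [map_mul, conj_exp_neg_I_mul]
    ring
  have hval3 : (∫ θ in (0:ℝ)..(2*π), P θ * (starRingEnd ℂ) (a θ))
      = ((2*π:ℝ):ℂ) * ∑ n ∈ v, ((Complex.normSq (b n):ℝ):ℂ) := by
    have h1 : ∀ θ : ℝ, P θ * (starRingEnd ℂ) (a θ)
        = ∑ n ∈ v, b n * (Complex.exp (Complex.I * n * θ) * (starRingEnd ℂ) (a θ)) := by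
      intro θ
      rw [hPdef]
      simp only
      rw [Finset.sum_mul]
      apply Finset.sum_congr rfl
      intro n _
      ring
    rw [intervalIntegral.integral_congr (fun θ _ => h1 θ),
      intervalIntegral.integral_finset_sum (fun n _ => (hIexpconj n 0 (2*π)).const_mul _)]
    have h2 : ∀ n ∈ v, (∫ θ in (0:ℝ)..(2*π),
        b n * (Complex.exp (Complex.I * n * θ) * (starRingEnd ℂ) (a θ)))
        = ((2*π:ℝ):ℂ) * ((Complex.normSq (b n):ℝ):ℂ) := by
      intro n _
      rw [intervalIntegral.integral_const_mul, hconjint n, map_mul, Complex.conj_ofReal]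
      calc b n * (((2*π:ℝ):ℂ) * (starRingEnd ℂ) (b n))
          = ((2*π:ℝ):ℂ) * (b n * (starRingEnd ℂ) (b n)) := by ring
      _ = ((2*π:ℝ):ℂ) * ((Complex.normSq (b n):ℝ):ℂ) := by rw [Complex.mul_conj]
    rw [Finset.sum_congr rfl h2, ← Finset.mul_sum]
  have hval4 : (∫ θ in (0:ℝ)..(2*π), P θ * (starRingEnd ℂ) (P θ))
      = ((2*π:ℝ):ℂ) * ∑ n ∈ v, ((Complex.normSq (b n):ℝ):ℂ) := by
    have h1 : ∀ θ : ℝ, P θ * (starRingEnd ℂ) (P θ)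
        = ∑ n ∈ v, ∑ m ∈ v, (b n * (starRingEnd ℂ) (b m))
            * Complex.exp (Complex.I * ((n - m : ℤ):ℂ) * θ) := by
      intro θ
      rw [hPdef]
      simp only
      rw [hconjP θ, Finset.sum_mul_sum]
      apply Finset.sum_congr rfl
      intro n _
      apply Finset.sum_congr rfl
      intro m _
      calc b n * Complex.exp (Complex.I * n * θ)
            * ((starRingEnd ℂ) (b m) * Complex.exp (-Complex.I * m * θ))
          = (b n * (starRingEnd ℂ) (b m))
            * (Complex.exp (Complex.I * n * θ) * Complex.exp (-Complex.I * m * θ)) := by ring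
      _ = (b n * (starRingEnd ℂ) (b m)) * Complex.exp (Complex.I * ((n - m : ℤ):ℂ) * θ) := by
          rw [← Complex.exp_add]
          congr 1
          push_cast
          ring
    rw [intervalIntegral.integral_congr (fun θ _ => h1 θ)]
    have hfs := intervalIntegral.integral_finset_sum (μ := volume) (a := 0) (b := 2*π)
      (s := v) (f := fun (n : ℤ) (θ : ℝ) => ∑ m ∈ v, (b n * (starRingEnd ℂ) (b m))
        * Complex.exp (Complex.I * ((n - m : ℤ):ℂ) * θ))
      (fun n _ => Continuous.intervalIntegrable (continuous_finset_sum _ (fun m _ =>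
        continuous_const.mul (Complex.continuous_exp.comp
          (continuous_const.mul Complex.continuous_ofReal)))) 0 (2*π))
    rw [hfs]
    have h2 : ∀ n ∈ v, (∫ θ in (0:ℝ)..(2*π), ∑ m ∈ v, (b n * (starRingEnd ℂ) (b m))
        * Complex.exp (Complex.I * ((n - m : ℤ):ℂ) * θ))
        = ((2*π:ℝ):ℂ) * ((Complex.normSq (b n):ℝ):ℂ) := by
      intro n hn
      have hfs2 := intervalIntegral.integral_finset_sum (μ := volume) (a := 0) (b := 2*π)
        (s := v) (f := fun (m : ℤ) (θ : ℝ) => (b n * (starRingEnd ℂ) (b m))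
          * Complex.exp (Complex.I * ((n - m : ℤ):ℂ) * θ))
        (fun m _ => Continuous.intervalIntegrable (continuous_const.mul
          (Complex.continuous_exp.comp
            (continuous_const.mul Complex.continuous_ofReal))) 0 (2*π))
      rw [hfs2]
      have h3 : ∀ m ∈ v, (∫ θ in (0:ℝ)..(2*π), (b n * (starRingEnd ℂ) (b m))
          * Complex.exp (Complex.I * ((n - m : ℤ):ℂ) * θ))
          = if n = m then (b n * (starRingEnd ℂ) (b n)) * ((2*π:ℝ):ℂ) else 0 := by
        intro m _
        rw [intervalIntegral.integral_const_mul, horth (n - m)]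
        by_cases hnm : n = m
        · subst hnm
          simp
        · rw [if_neg (sub_ne_zero.mpr hnm), if_neg hnm, mul_zero]
      rw [Finset.sum_congr rfl h3, Finset.sum_ite_eq v n
        (fun m => (b n * (starRingEnd ℂ) (b n)) * ((2*π:ℝ):ℂ)), if_pos hn,
        Complex.mul_conj]
      ring
    rw [Finset.sum_congr rfl h2, ← Finset.mul_sum]
  -- expansion
  have hptwise : ∀ θ : ℝ, (a θ - P θ) * (starRingEnd ℂ) (a θ - P θ)
      = (a θ * (starRingEnd ℂ) (a θ) - a θ * (starRingEnd ℂ) (P θ))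
        - (P θ * (starRingEnd ℂ) (a θ) - P θ * (starRingEnd ℂ) (P θ)) := by
    intro θ
    rw [map_sub]
    ring
  have hexp : (∫ θ in (0:ℝ)..(2*π), (a θ - P θ) * (starRingEnd ℂ) (a θ - P θ))
      = ((∫ θ in (0:ℝ)..(2*π), a θ * (starRingEnd ℂ) (a θ))
          - (∫ θ in (0:ℝ)..(2*π), a θ * (starRingEnd ℂ) (P θ)))
        - ((∫ θ in (0:ℝ)..(2*π), P θ * (starRingEnd ℂ) (a θ))
          - (∫ θ in (0:ℝ)..(2*π), P θ * (starRingEnd ℂ) (P θ))) := by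
    rw [intervalIntegral.integral_congr (fun θ _ => hptwise θ),
      intervalIntegral.integral_sub (hI1.sub hI2) (hI3.sub hI4),
      intervalIntegral.integral_sub hI1 hI2, intervalIntegral.integral_sub hI3 hI4]
  have hR0 : 0 ≤ ∫ θ in (0:ℝ)..(2*π), Complex.normSq (a θ - P θ) :=
    intervalIntegral.integral_nonneg (by positivity) (fun θ _ => Complex.normSq_nonneg _)
  have hRC : (((∫ θ in (0:ℝ)..(2*π), Complex.normSq (a θ - P θ)) : ℝ):ℂ)
      = ∫ θ in (0:ℝ)..(2*π), (a θ - P θ) * (starRingEnd ℂ) (a θ - P θ) := by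
    rw [← intervalIntegral.integral_ofReal]
    apply intervalIntegral.integral_congr
    intro θ _
    exact (Complex.mul_conj _).symm
  have hsumcast : ∑ n ∈ v, ((Complex.normSq (b n):ℝ):ℂ)
      = (((∑ n ∈ v, Complex.normSq (b n)) : ℝ):ℂ) := by
    push_cast
    rfl
  have hkeyC : (((∫ θ in (0:ℝ)..(2*π), Complex.normSq (a θ - P θ)) : ℝ):ℂ)
      = (((∫ θ in (0:ℝ)..(2*π), Complex.normSq (a θ))
          - 2*π*(∑ n ∈ v, Complex.normSq (b n)) : ℝ):ℂ) := by
    rw [hRC, hexp, hval1, hval2, hval3, hval4, hsumcast]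
    push_cast
    ring
  have hkeyR : (∫ θ in (0:ℝ)..(2*π), Complex.normSq (a θ - P θ))
      = (∫ θ in (0:ℝ)..(2*π), Complex.normSq (a θ))
        - 2*π*(∑ n ∈ v, Complex.normSq (b n)) := by
    exact_mod_cast hkeyC
  -- bound on ∫ normSq a
  have hARle : (∫ θ in (0:ℝ)..(2*π), Complex.normSq (a θ)) ≤ M^2 * ℓ := by
    have hperN : Function.Periodic (fun θ => Complex.normSq (a θ)) (2*π) := by
      intro θ
      simp only
      rw [hper θ]
    have haeN : ∀ᵐ θ, ‖Complex.normSq (a θ)‖ ≤ M^2 := by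
      filter_upwards [hae] with θ h
      rw [Real.norm_eq_abs, abs_of_nonneg (Complex.normSq_nonneg _), Complex.normSq_eq_norm_sq]
      exact pow_le_pow_left₀ (norm_nonneg _) h 2
    have hintN : ∀ x y : ℝ, IntervalIntegrable (fun θ => Complex.normSq (a θ)) volume x y := by
      intro x y
      exact intIntBdd _ ((Complex.continuous_normSq.measurable.comp ha).aestronglyMeasurable)
        (M^2) haeN x y
    have hshiftN : ∫ θ in (0:ℝ)..(2*π), Complex.normSq (a θ)
        = ∫ θ in c..(c+ℓ), Complex.normSq (a θ) := by
      apply shift_supp _ c ℓ hl hl2 hperN hintN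
      intro θ hθ
      rw [hz θ hθ]
      simp
    rw [hshiftN]
    have hb2 := interval_norm_bound (fun θ => Complex.normSq (a θ)) c (c+ℓ) (M^2)
      (by linarith) (by filter_upwards [haeN] with θ h _; exact h)
    calc (∫ θ in c..(c+ℓ), Complex.normSq (a θ))
        ≤ |∫ θ in c..(c+ℓ), Complex.normSq (a θ)| := le_abs_self _
    _ = ‖∫ θ in c..(c+ℓ), Complex.normSq (a θ)‖ := (Real.norm_eq_abs _).symm
    _ ≤ M^2 * ((c+ℓ) - c) := hb2
    _ = M^2 * ℓ := by ring
  have hSRle : (∑ n ∈ v, Complex.normSq (b n)) ≤ (2*π)⁻¹ * ℓ * M^2 := by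
    rw [show (2*π)⁻¹ * ℓ * M^2 = (M^2 * ℓ)/(2*π) by field_simp,
      le_div_iff₀ (by positivity : (0:ℝ) < 2*π)]
    nlinarith [hkeyR, hR0, hARle]
  have hEq : ∑ n ∈ v, ‖fourierCoeffT a n‖^2 = ∑ n ∈ v, Complex.normSq (b n) := by
    apply Finset.sum_congr rfl
    intro n _
    rw [Complex.sq_norm]
  rw [hEq]
  exact hSRle

end atom

/-- For an `L^∞` atom `a` supported in an arc `I = [c, c+ℓ)` of the torus with
`∫_𝕋 a = 0`, one has `Σ_{n≠0} Ψ₀(|n â(n)|)/n² ≤ C |I| Ψ₀(‖a‖_∞)`. -/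
theorem stmt17 :
    ∃ C > (0 : ℝ), ∀ (a : ℝ → ℂ) (c ℓ : ℝ), 0 < ℓ → ℓ ≤ 2 * π →
      Measurable a → Function.Periodic a (2 * π) →
      (∀ θ ∈ Ico c (c + 2 * π), θ ∉ Ico c (c + ℓ) → a θ = 0) →
      einfNormC a < ⊤ →
      (∫ θ in (0 : ℝ)..(2 * π), a θ) = 0 →
      (∑' n : ℤ, (if n = 0 then 0 else
          psi0E (ENNReal.ofReal ‖(n : ℂ) * fourierCoeffT a n‖) /
            ENNReal.ofReal ((n : ℝ) ^ 2))) ≤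
        ENNReal.ofReal (C * ℓ * psi0 ((einfNormC a).toReal)) := by
  refine ⟨5000, by norm_num, ?_⟩
  intro a c ℓ hl hl2 ha hper hsupp hfin hmean
  classical
  set M := (einfNormC a).toReal with hMdef
  have hM0 : 0 ≤ M := ENNReal.toReal_nonneg
  have hae : ∀ᵐ θ, ‖a θ‖ ≤ M := by
    have h1 : ∀ᵐ θ, (‖a θ‖₊ : ℝ≥0∞) ≤ einfNormC a := ae_le_essSup
    filter_upwards [h1] with θ h
    have h2 : ((‖a θ‖₊ : ℝ≥0∞)).toReal ≤ M := ENNReal.toReal_mono (ne_of_lt hfin) h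
    simpa using h2
  have hz : ∀ θ ∈ Set.Ico (c+ℓ) (c+2*π), a θ = 0 := by
    intro θ hθ
    apply hsupp θ ⟨by linarith [hθ.1, hl], hθ.2⟩
    intro hmem
    linarith [hmem.2, hθ.1]
  set β : ℤ → ℝ := fun n => ‖fourierCoeffT a n‖ with hβdef
  have hβ0 : ∀ n, 0 ≤ β n := fun n => norm_nonneg _
  have hc : ∀ n : ℤ, |(n:ℝ)| * β n ≤ (2*π)⁻¹ * M * ℓ^2 * (n:ℝ)^2 := by
    intro n
    have h := coeff_cancel a c ℓ M ha hper hl hl2 hz hM0 hae hmean n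
    calc |(n:ℝ)| * β n ≤ |(n:ℝ)| * ((2*π)⁻¹ * M * ℓ^2 * |(n:ℝ)|) :=
          mul_le_mul_of_nonneg_left h (abs_nonneg _)
    _ = (2*π)⁻¹ * M * ℓ^2 * (|(n:ℝ)|^2) := by ring
    _ = (2*π)⁻¹ * M * ℓ^2 * (n:ℝ)^2 := by rw [sq_abs]
  have hB : ∀ v : Finset ℤ, (∑ n ∈ v, (β n)^2) ≤ (2*π)⁻¹ * ℓ * M^2 :=
    fun v => bessel_bound a c ℓ M ha hper hl hl2 hz hM0 hae v
  have hmain := main_arith M ℓ hM0 hl hl2 β hβ0 hc hB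
  rw [ENNReal.tsum_eq_iSup_sum]
  apply iSup_le
  intro s
  have hzero : ∀ n ∈ s, (if n = 0 then 0 else
      psi0E (ENNReal.ofReal ‖(n:ℂ) * fourierCoeffT a n‖) /
        ENNReal.ofReal ((n:ℝ)^2)) ≠ 0 → n ≠ 0 := by
    intro n _ h hn
    exact h (by simp [hn])
  rw [← Finset.sum_filter_of_ne hzero]
  set u := s.filter (fun n => n ≠ 0) with hudef
  have hu : ∀ n ∈ u, n ≠ 0 := fun n hn => (Finset.mem_filter.mp hn).2
  have hterm : ∀ n ∈ u, (if n = 0 then 0 else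
      psi0E (ENNReal.ofReal ‖(n:ℂ) * fourierCoeffT a n‖) / ENNReal.ofReal ((n:ℝ)^2))
      = ENNReal.ofReal (psi0 (|(n:ℝ)| * β n) / (n:ℝ)^2) := by
    intro n hn
    have hn0 := hu n hn
    rw [if_neg hn0]
    have ht : ‖(n:ℂ) * fourierCoeffT a n‖ = |(n:ℝ)| * β n := by
      rw [norm_mul]
      congr 1
      rw [Complex.norm_intCast]
    rw [ht]
    have h1 : (0:ℝ) ≤ |(n:ℝ)| * β n := mul_nonneg (abs_nonneg _) (hβ0 n)
    rw [psi0E, ENNReal.toReal_ofReal h1]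
    have hlog : 0 < Real.log (Real.exp 1 + |(n:ℝ)| * β n) := by
      have := one_le_loge _ h1
      linarith
    have hn2 : (0:ℝ) < (n:ℝ)^2 := by
      have : ((n:ℝ)) ≠ 0 := Int.cast_ne_zero.mpr hn0
      positivity
    rw [← ENNReal.ofReal_div_of_pos hlog, ← ENNReal.ofReal_div_of_pos hn2]
    rfl
  rw [Finset.sum_congr rfl hterm,
    ← ENNReal.ofReal_sum_of_nonneg (fun n hn => div_nonneg
      (psi0_nonneg _ (mul_nonneg (abs_nonneg _) (hβ0 n))) (sq_nonneg _))]
  exact ENNReal.ofReal_le_ofReal (hmain u hu)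

end
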